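/- (Perturbed eigenvalue monotonicity) Let J be a real symmetric N×N matrix such that J + M·Id is nonnegative and irreducible for some M, and let E be a nonnegative diagonal matrix, E ≠ 0, whose support is contained in the index set. Then the largest eigenvalue of J − E is strictly less than the largest eigenvalue of J. -/

import Mathlib

open Matrix

private lemma quad_mono {N : ℕ} (A : Matrix (Fin N) (Fin N) ℝ) (hA : ∀ i j, 0 ≤ A i j)
    (v : Fin N → ℝ) :
    v ⬝ᵥ A.mulVec v ≤ (fun i => |v i|) ⬝ᵥ A.mulVec (fun i => |v i|) := by
  simp only [dotProduct, Matrix.mulVec, Finset.mul_sum]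
  refine Finset.sum_le_sum fun i _ => Finset.sum_le_sum fun j _ => ?_
  calc v i * (A i j * v j) ≤ |v i * (A i j * v j)| := le_abs_self _
    _ = |v i| * (A i j * |v j|) := by rw [abs_mul, abs_mul, abs_of_nonneg (hA i j)]

/-- A square real matrix is irreducible if the directed graph with an edge `i → j` whenever
`A i j > 0` is strongly connected. -/
def Matrix.IsIrreducible' {N : ℕ} (A : Matrix (Fin N) (Fin N) ℝ) : Prop :=
  ∀ i j : Fin N, Relation.TransGen (fun a b => 0 < A a b) i j

/-- perturbed eigenvalue monotonicity: if `J` is real symmetric with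
`J + M·Id` entrywise nonnegative and irreducible, and `E = diagonal ε` is a nonzero
nonnegative diagonal matrix, then the largest eigenvalue of `J − E` is strictly smaller
than the largest eigenvalue of `J`. -/
theorem stmt16 {N : ℕ} (J : Matrix (Fin N) (Fin N) ℝ) (hsym : J.IsSymm)
    (M : ℝ)
    (hnn : ∀ i j, 0 ≤ (J + M • (1 : Matrix (Fin N) (Fin N) ℝ)) i j)
    (hirr : (J + M • (1 : Matrix (Fin N) (Fin N) ℝ)).IsIrreducible')
    (ε : Fin N → ℝ) (hε : ∀ i, 0 ≤ ε i) (hεne : ε ≠ 0)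
    (lam1 : ℝ) (h1mem : lam1 ∈ spectrum ℝ J)
    (h1max : ∀ μ ∈ spectrum ℝ J, μ ≤ lam1)
    (lam2 : ℝ) (h2mem : lam2 ∈ spectrum ℝ (J - Matrix.diagonal ε))
    (h2max : ∀ μ ∈ spectrum ℝ (J - Matrix.diagonal ε), μ ≤ lam2) :
    lam2 < lam1 := by
  classical
  set A := J + M • (1 : Matrix (Fin N) (Fin N) ℝ) with hAdef
  have hJ : J.IsHermitian := by
    exact isHermitian_iff_isSymm.mpr hsym
  -- positive semidefiniteness of lam1 • 1 - J
  have hBh : (lam1 • (1 : Matrix (Fin N) (Fin N) ℝ) - J).IsHermitian := by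
    refine Matrix.IsHermitian.sub ?_ hJ
    simp [Matrix.IsHermitian, Matrix.conjTranspose_smul]
  have hBpsd : (lam1 • (1 : Matrix (Fin N) (Fin N) ℝ) - J).PosSemidef := by
    refine hBh.posSemidef_iff_eigenvalues_nonneg.mpr fun i => show (0:ℝ) ≤ _ from ?_
    have hmem := hBh.eigenvalues_mem_spectrum_real i
    have hmem' : hBh.eigenvalues i ∈ spectrum ℝ
        ((algebraMap ℝ (Matrix (Fin N) (Fin N) ℝ)) lam1 - J) := by
      rw [Algebra.algebraMap_eq_smul_one]; exact hmem
    rw [← spectrum.singleton_sub_eq] at hmem'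
    obtain ⟨x, hx, y, hy, hxy⟩ := hmem'
    rw [Set.mem_singleton_iff] at hx
    subst hx
    have hyle := h1max y hy
    simp only at hxy
    rw [← hxy]
    linarith
  have rayleigh : ∀ x : Fin N → ℝ, x ⬝ᵥ J.mulVec x ≤ lam1 * (x ⬝ᵥ x) := by
    intro x
    have h0 := hBpsd.dotProduct_mulVec_nonneg x
    rw [Matrix.sub_mulVec, Matrix.smul_mulVec, Matrix.one_mulVec, dotProduct_sub,
      dotProduct_smul, star_trivial, smul_eq_mul] at h0
    linarith
  -- eigenvector of J - diagonal ε
  obtain ⟨v, hvne, hveq⟩ : ∃ v : Fin N → ℝ, v ≠ 0 ∧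
      (J - Matrix.diagonal ε).mulVec v = lam2 • v := by
    rw [← AlgEquiv.spectrum_eq (Matrix.toLinAlgEquiv' (R := ℝ) (n := Fin N)),
      ← Module.End.hasEigenvalue_iff_mem_spectrum] at h2mem
    obtain ⟨v, hv⟩ := h2mem.exists_hasEigenvector
    refine ⟨v, hv.2, ?_⟩
    rw [Matrix.sub_mulVec]
    simpa [Matrix.toLinAlgEquiv'_apply, Matrix.toLin'_apply, Matrix.sub_mulVec]
      using hv.apply_eq_smul
  set u : Fin N → ℝ := fun i => |v i| with hudef
  have hun : ∀ i, 0 ≤ u i := fun i => abs_nonneg _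
  have huu : u ⬝ᵥ u = v ⬝ᵥ v := by
    simp only [dotProduct, hudef, abs_mul_abs_self]
  obtain ⟨k, hk⟩ : ∃ k, v k ≠ 0 := Function.ne_iff.mp hvne
  have hc : 0 < v ⬝ᵥ v := by
    refine Finset.sum_pos' (fun i _ => mul_self_nonneg _) ⟨k, Finset.mem_univ k, ?_⟩
    exact mul_self_pos.mpr hk
  have hexpand : ∀ x : Fin N → ℝ, x ⬝ᵥ A.mulVec x = x ⬝ᵥ J.mulVec x + M * (x ⬝ᵥ x) := by
    intro x
    rw [hAdef, Matrix.add_mulVec, Matrix.smul_mulVec, Matrix.one_mulVec,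
      dotProduct_add, dotProduct_smul, smul_eq_mul]
  have hmono : v ⬝ᵥ J.mulVec v ≤ u ⬝ᵥ J.mulVec u := by
    have h1 := quad_mono A hnn v
    rw [hexpand v, hexpand u, huu] at h1
    linarith
  have hdiag : v ⬝ᵥ (Matrix.diagonal ε).mulVec v = ∑ i, ε i * v i ^ 2 := by
    simp only [dotProduct, Matrix.mulVec_diagonal]
    exact Finset.sum_congr rfl fun i _ => by ring
  have hsplit : lam2 * (v ⬝ᵥ v) = v ⬝ᵥ J.mulVec v - ∑ i, ε i * v i ^ 2 := by
    have h2 : v ⬝ᵥ ((J - Matrix.diagonal ε).mulVec v) = lam2 * (v ⬝ᵥ v) := by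
      rw [hveq, dotProduct_smul, smul_eq_mul]
    rw [Matrix.sub_mulVec, dotProduct_sub, hdiag] at h2
    linarith
  have hSnn : ∀ i ∈ Finset.univ, 0 ≤ ε i * v i ^ 2 :=
    fun i _ => mul_nonneg (hε i) (sq_nonneg _)
  rcases (Finset.sum_nonneg hSnn).lt_or_eq with hSpos | hSzero
  · have h2 := rayleigh v
    have : lam2 * (v ⬝ᵥ v) < lam1 * (v ⬝ᵥ v) := by linarith
    exact lt_of_mul_lt_mul_right this hc.le
  · -- the perturbation energy vanishes
    have hzero : ∀ i, ε i * v i ^ 2 = 0 := fun i =>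
      (Finset.sum_eq_zero_iff_of_nonneg hSnn).mp hSzero.symm i (Finset.mem_univ i)
    have hEv : (Matrix.diagonal ε).mulVec v = 0 := by
      funext i
      rw [Matrix.mulVec_diagonal]
      rcases mul_eq_zero.mp (hzero i) with h | h
      · simp [h]
      · simp [pow_eq_zero_iff (two_ne_zero) |>.mp h]
    have hJv : J.mulVec v = lam2 • v := by
      rw [← hveq, Matrix.sub_mulVec, hEv, sub_zero]
    have hmemJ : lam2 ∈ spectrum ℝ J := by
      rw [← AlgEquiv.spectrum_eq (Matrix.toLinAlgEquiv' (R := ℝ) (n := Fin N)),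
        ← Module.End.hasEigenvalue_iff_mem_spectrum]
      exact Module.End.hasEigenvalue_of_hasEigenvector
        ⟨Module.End.mem_eigenspace_iff.mpr
          (by simpa [Matrix.toLinAlgEquiv'_apply, Matrix.toLin'_apply] using hJv), hvne⟩
    rcases (h1max _ hmemJ).lt_or_eq with h | heq
    · exact h
    · exfalso
      have hvJv : v ⬝ᵥ J.mulVec v = lam1 * (v ⬝ᵥ v) := by
      -- from hsplit, sum = 0, lam2 = lam1
        rw [← heq]
        rw [hsplit, ← hSzero]
        ring
      have huJu : u ⬝ᵥ J.mulVec u = lam1 * (u ⬝ᵥ u) := by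
        refine le_antisymm (rayleigh u) ?_
        rw [huu]; linarith
      have hBzero : (lam1 • (1 : Matrix (Fin N) (Fin N) ℝ) - J).mulVec u = 0 := by
        rw [← hBpsd.dotProduct_mulVec_zero_iff, star_trivial, Matrix.sub_mulVec,
          Matrix.smul_mulVec, Matrix.one_mulVec, dotProduct_sub, dotProduct_smul,
          smul_eq_mul, huJu]
        ring
      have hJu : J.mulVec u = lam1 • u := by
        rw [Matrix.sub_mulVec, Matrix.smul_mulVec, Matrix.one_mulVec,
          sub_eq_zero] at hBzero
        exact hBzero.symm
      have hAu : A.mulVec u = (lam1 + M) • u := by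
        rw [hAdef, Matrix.add_mulVec, Matrix.smul_mulVec, Matrix.one_mulVec, hJu,
          add_smul]
      obtain ⟨i₀, hi₀⟩ : ∃ i, ε i ≠ 0 := Function.ne_iff.mp hεne
      have hui₀ : u i₀ = 0 := by
        rcases mul_eq_zero.mp (hzero i₀) with h | h
        · exact absurd h hi₀
        · simpa [hudef] using pow_eq_zero_iff (two_ne_zero) |>.mp h
      have hprop : ∀ j, u j = 0 → ∀ l, 0 < A j l → u l = 0 := by
        intro j hj l hjl
        have hAj : (A.mulVec u) j = 0 := by rw [hAu]; simp [hj]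
        have hterms : ∀ l ∈ Finset.univ, 0 ≤ A j l * u l :=
          fun l _ => mul_nonneg (hnn j l) (hun l)
        have h0 := (Finset.sum_eq_zero_iff_of_nonneg hterms).mp
          (by simpa [Matrix.mulVec, dotProduct] using hAj) l (Finset.mem_univ l)
        exact (mul_eq_zero.mp h0).resolve_left (ne_of_gt hjl)
      have hpath : ∀ m, Relation.TransGen (fun a b => 0 < A a b) i₀ m → u m = 0 := by
        intro m hm
        induction hm with
        | single h => exact hprop i₀ hui₀ _ h
        | tail h₁ h₂ ih => exact hprop _ ih _ h₂
      exact hk (abs_eq_zero.mp (hpath k (hirr i₀ k)))
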